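/- Let r ∈ ℚ with r > 1 and r ∉ ℕ, and let S_r = ⟨r^n : n ∈ ℕ₀⟩ (which is atomic). Then Δ(S_r) ⊆ {n(r) − d(r)}. -/

import Mathlib

open scoped NNRat ENNReal

/-- The set of atoms of a Puiseux monoid (additive submonoid of `ℚ≥0`). -/
def PMatoms (M : AddSubmonoid ℚ≥0) : Set ℚ≥0 :=
  {a | a ∈ M ∧ a ≠ 0 ∧ ∀ y ∈ M, ∀ z ∈ M, y ≠ 0 → z ≠ 0 → a ≠ y + z}

/-- A Puiseux monoid is atomic if it is generated by its atoms. -/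
def PMatomic (M : AddSubmonoid ℚ≥0) : Prop :=
  ∀ x ∈ M, x ∈ AddSubmonoid.closure (PMatoms M)

/-- The set of factorizations of `x` in `M`: multisets of atoms summing to `x`. -/
def PMfactorizations (M : AddSubmonoid ℚ≥0) (x : ℚ≥0) : Set (Multiset ℚ≥0) :=
  {s | (∀ a ∈ s, a ∈ PMatoms M) ∧ s.sum = x}

/-- The set of lengths of `x` in `M`. -/
def PMlengths (M : AddSubmonoid ℚ≥0) (x : ℚ≥0) : Set ℕ :=
  Multiset.card '' PMfactorizations M x

/-- The elasticity of an element: `sup L(x) / inf L(x)` in `ℝ≥0∞`, `1` for `x = 0`. -/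
noncomputable def PMelasticityOf (M : AddSubmonoid ℚ≥0) (x : ℚ≥0) : ℝ≥0∞ :=
  if x = 0 then 1
  else sSup ((fun n : ℕ => (n : ℝ≥0∞)) '' PMlengths M x) /
       sInf ((fun n : ℕ => (n : ℝ≥0∞)) '' PMlengths M x)

/-- The elasticity of a Puiseux monoid. -/
noncomputable def PMelasticity (M : AddSubmonoid ℚ≥0) : ℝ≥0∞ :=
  ⨆ x ∈ M, PMelasticityOf M x

/-- The union of sets of lengths containing `n`. -/
def PMunionOfLengths (M : AddSubmonoid ℚ≥0) (n : ℕ) : Set ℕ :=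
  {m | ∃ x : ℚ≥0, n ∈ PMlengths M x ∧ m ∈ PMlengths M x}

/-- The `n`-th local elasticity `ρ_n(M) = sup U_n(M)` in `ℝ≥0∞`. -/
noncomputable def PMlocalElasticity (M : AddSubmonoid ℚ≥0) (n : ℕ) : ℝ≥0∞ :=
  sSup ((fun m : ℕ => (m : ℝ≥0∞)) '' PMunionOfLengths M n)

/-- The set of distances of an element `x` of `M`. -/
def PMdistances (M : AddSubmonoid ℚ≥0) (x : ℚ≥0) : Set ℕ :=
  {d | 0 < d ∧ ∃ l ∈ PMlengths M x,
    PMlengths M x ∩ Set.Icc l (l + d) = {l, l + d}}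

/-- The set of distances (delta set) of `M`. -/
def PMDelta (M : AddSubmonoid ℚ≥0) : Set ℕ :=
  ⋃ x ∈ {y : ℚ≥0 | y ∈ M ∧ y ≠ 0}, PMdistances M x

/-- `(Mi)` is an approximation of `M`: an increasing sequence of atomic submonoids
with union `M` and increasing sets of atoms. -/
def PMapprox (M : AddSubmonoid ℚ≥0) (Mi : ℕ → AddSubmonoid ℚ≥0) : Prop :=
  (∀ i, Mi i ≤ Mi (i + 1)) ∧ (∀ i, PMatomic (Mi i)) ∧
  (∀ i, PMatoms (Mi i) ⊆ PMatoms (Mi (i + 1))) ∧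
  (∀ x, x ∈ M ↔ ∃ i, x ∈ Mi i)



namespace Stmt14Aux

open Multiset

/-- Evaluation of a multiset of exponents. -/
def eval (r : ℚ≥0) (e : Multiset ℕ) : ℚ≥0 := (e.map (fun n => r ^ n)).sum

/-- One swap: replace `p` copies of `r^n` by `q` copies of `r^(n+1)`. -/
def Rel (p q : ℕ) (e e' : Multiset ℕ) : Prop :=
  ∃ t n, e = replicate p n + t ∧ e' = replicate q (n + 1) + t

/-- Chain of swaps in either direction. -/
def Chain (p q : ℕ) (e e' : Multiset ℕ) : Prop :=
  Relation.ReflTransGen (fun a b => Rel p q a b ∨ Rel p q b a) e e'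

variable {r : ℚ≥0} {p q : ℕ}

@[simp] lemma eval_zero : eval r 0 = 0 := rfl

@[simp] lemma eval_cons (n : ℕ) (e : Multiset ℕ) :
    eval r (n ::ₘ e) = r ^ n + eval r e := by simp [eval]

@[simp] lemma eval_add (e e' : Multiset ℕ) :
    eval r (e + e') = eval r e + eval r e' := by simp [eval]

@[simp] lemma eval_replicate (k n : ℕ) :
    eval r (replicate k n) = (k : ℚ≥0) * r ^ n := by
  simp [eval, Multiset.map_replicate, Multiset.sum_replicate, nsmul_eq_mul]

@[simp] lemma eval_singleton (n : ℕ) : eval r ({n} : Multiset ℕ) = r ^ n := by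
  simp [eval]

lemma eval_eq_zero_iff (hr : 0 < r) {e : Multiset ℕ} : eval r e = 0 ↔ e = 0 := by
  constructor
  · intro h
    by_contra he
    obtain ⟨n, hn⟩ := exists_mem_of_ne_zero he
    obtain ⟨t, rfl⟩ := exists_cons_of_mem hn
    rw [eval_cons, add_eq_zero] at h
    exact absurd h.1 (pow_pos hr n).ne'
  · rintro rfl; rfl

lemma Rel.eval_eq (hqr : (q : ℚ≥0) * r = p) {e e' : Multiset ℕ} (h : Rel p q e e') :
    eval r e = eval r e' := by
  obtain ⟨t, n, rfl, rfl⟩ := h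
  simp only [eval_add, eval_replicate]
  congr 1
  rw [pow_succ, ← hqr]; ring

lemma chain_symm {e e' : Multiset ℕ} (h : Chain p q e e') : Chain p q e' e :=
  by
    haveI : Std.Symm (fun a b => Rel p q a b ∨ Rel p q b a) := ⟨fun _ _ hab => hab.symm⟩
    exact Relation.ReflTransGen.stdSymm.symm _ _ h

lemma Chain.eval_eq (hqr : (q : ℚ≥0) * r = p) {e e' : Multiset ℕ} (h : Chain p q e e') :
    eval r e = eval r e' := by
  induction h with
  | refl => rfl
  | tail _ hstep ih =>
      rcases hstep with h' | h'
      · exact ih.trans (h'.eval_eq hqr)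
      · exact ih.trans (h'.eval_eq hqr).symm

lemma Chain.card_modEq (hqp : q ≤ p) {e e' : Multiset ℕ} (h : Chain p q e e') :
    Multiset.card e ≡ Multiset.card e' [MOD p - q] := by
  induction h with
  | refl => rfl
  | tail _ hstep ih =>
      refine ih.trans ?_
      have base : p ≡ q [MOD p - q] :=
        ((Nat.modEq_iff_dvd' hqp).mpr dvd_rfl).symm
      rcases hstep with ⟨t, n, rfl, rfl⟩ | ⟨t, n, h1, h2⟩
      · simpa [Multiset.card_add, Multiset.card_replicate] using base.add_right (Multiset.card t)
      · rw [h1, h2]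
        simpa [Multiset.card_add, Multiset.card_replicate] using base.symm.add_right (Multiset.card t)

lemma Rel.add_left (t : Multiset ℕ) {e e' : Multiset ℕ} (h : Rel p q e e') :
    Rel p q (t + e) (t + e') := by
  obtain ⟨t', n, rfl, rfl⟩ := h
  exact ⟨t + t', n, by abel, by abel⟩

lemma Chain.add_left (t : Multiset ℕ) {e e' : Multiset ℕ} (h : Chain p q e e') :
    Chain p q (t + e) (t + e') := by
  refine Relation.ReflTransGen.lift (fun s => t + s) ?_ _ _ h
  rintro a b (hab | hab)
  · exact Or.inl (hab.add_left t)
  · exact Or.inr (hab.add_left t)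

lemma Rel.map_succ {e e' : Multiset ℕ} (h : Rel p q e e') :
    Rel p q (e.map (· + 1)) (e'.map (· + 1)) := by
  obtain ⟨t, n, rfl, rfl⟩ := h
  exact ⟨t.map (· + 1), n + 1, by rw [Multiset.map_add, Multiset.map_replicate],
    by rw [Multiset.map_add, Multiset.map_replicate]⟩

lemma Chain.map_succ {e e' : Multiset ℕ} (h : Chain p q e e') :
    Chain p q (e.map (· + 1)) (e'.map (· + 1)) := by
  refine Relation.ReflTransGen.lift (fun (s : Multiset ℕ) => s.map (· + 1)) ?_ _ _ h
  rintro a b (hab | hab)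
  · exact Or.inl hab.map_succ
  · exact Or.inr hab.map_succ

lemma chain_zeros : ∀ (k b : ℕ) (t : Multiset ℕ),
    Chain p q (replicate (b + k * p) 0 + t) (replicate b 0 + (replicate (k * q) 1 + t)) := by
  intro k
  induction k with
  | zero =>
      intro b t
      have : (0 : ℕ) * q = 0 := by ring
      simp only [Nat.zero_mul, Multiset.replicate_zero, zero_add, add_zero]
      exact Relation.ReflTransGen.refl
  | succ k ih =>
      intro b t
      have step : Rel p q (replicate (b + (k + 1) * p) 0 + t)
          (replicate (b + k * p) 0 + (replicate q 1 + t)) := by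
        refine ⟨replicate (b + k * p) 0 + t, 0, ?_, ?_⟩
        · have h1 : b + (k + 1) * p = p + (b + k * p) := by ring
          rw [h1, Multiset.replicate_add]; abel
        · abel
      have rest := ih b (replicate q 1 + t)
      have heq : replicate b 0 + (replicate (k * q) 1 + (replicate q 1 + t))
          = replicate b 0 + (replicate ((k + 1) * q) 1 + t) := by
        have h2 : (k + 1) * q = k * q + q := by ring
        rw [h2, Multiset.replicate_add]; abel
      rw [heq] at rest
      exact Relation.ReflTransGen.head (Or.inl step) rest

end Stmt14Aux

namespace Stmt14Aux
open Multiset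
variable {r : ℚ≥0} {p q : ℕ}

/-- Natural-number evaluation after clearing denominators. -/
def natEval (p q N : ℕ) (e : Multiset ℕ) : ℕ :=
  (e.map (fun n => p ^ n * q ^ (N - n))).sum

lemma natEval_cast (hqr : (q : ℚ≥0) * r = p) (N : ℕ) :
    ∀ e : Multiset ℕ, (∀ n ∈ e, n ≤ N) →
      ((natEval p q N e : ℚ≥0)) = (q : ℚ≥0) ^ N * eval r e := by
  intro e
  induction e using Multiset.induction_on with
  | empty => simp [natEval]
  | cons n e ih =>
      intro h
      have hn : n ≤ N := h n (mem_cons_self n e)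
      have key : ((p : ℚ≥0)) ^ n * (q : ℚ≥0) ^ (N - n) = (q : ℚ≥0) ^ N * r ^ n := by
        rw [← hqr, mul_pow]
        rw [show (q : ℚ≥0) ^ N = (q : ℚ≥0) ^ n * (q : ℚ≥0) ^ (N - n) by
          rw [← pow_add, Nat.add_sub_cancel' hn]]
        ring
      have ih' := ih (fun m hm => h m (mem_cons_of_mem hm))
      simp only [natEval, Multiset.map_cons, Multiset.sum_cons, Nat.cast_add, Nat.cast_mul,
        Nat.cast_pow, eval_cons, mul_add] at *
      rw [ih', key]

lemma natEval_modEq (N : ℕ) : ∀ e : Multiset ℕ,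
    natEval p q N e ≡ e.count 0 * q ^ N [MOD p] := by
  intro e
  induction e using Multiset.induction_on with
  | empty => simp [natEval]; rfl
  | cons n e ih =>
      rcases Nat.eq_zero_or_pos n with rfl | hn
      · have : natEval p q N (0 ::ₘ e) = q ^ N + natEval p q N e := by
          simp [natEval]
        rw [this, count_cons_self]
        calc q ^ N + natEval p q N e ≡ q ^ N + e.count 0 * q ^ N [MOD p] := ih.add_left _
          _ = (e.count 0 + 1) * q ^ N := by ring
      · have hdvd : p ^ n * q ^ (N - n) ≡ 0 [MOD p] :=
          (Nat.modEq_zero_iff_dvd).mpr ((dvd_pow_self p hn.ne').mul_right _)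
        have : natEval p q N (n ::ₘ e) = p ^ n * q ^ (N - n) + natEval p q N e := by
          simp [natEval]
        rw [this, count_cons_of_ne (by omega) e]
        simpa using hdvd.add ih

lemma mem_le_sum {e : Multiset ℕ} {n : ℕ} (h : n ∈ e) : n ≤ e.sum := by
  obtain ⟨t, rfl⟩ := exists_cons_of_mem h
  simp [Multiset.sum_cons]

lemma count_zero_modEq (hcop : Nat.Coprime p q) (hqr : (q : ℚ≥0) * r = p)
    {e e' : Multiset ℕ} (h : eval r e = eval r e') :
    e.count 0 ≡ e'.count 0 [MOD p] := by
  set N := (e + e').sum with hN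
  have hbe : ∀ n ∈ e, n ≤ N := fun n hn => mem_le_sum (mem_add.mpr (Or.inl hn))
  have hbe' : ∀ n ∈ e', n ≤ N := fun n hn => mem_le_sum (mem_add.mpr (Or.inr hn))
  have hcast : ((natEval p q N e : ℚ≥0)) = ((natEval p q N e' : ℚ≥0)) := by
    rw [natEval_cast hqr N e hbe, natEval_cast hqr N e' hbe', h]
  have heq : natEval p q N e = natEval p q N e' := by exact_mod_cast hcast
  have h1 := (natEval_modEq (p := p) (q := q) N e).symm.trans
    ((heq ▸ Nat.ModEq.refl _ : natEval p q N e ≡ natEval p q N e' [MOD p]).trans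
      (natEval_modEq (p := p) (q := q) N e'))
  exact Nat.ModEq.cancel_right_of_coprime (by simpa using (hcop.pow_right N).gcd_eq_one) h1

/-- Weight measure for the induction. -/
def w (q : ℕ) (e : Multiset ℕ) : ℕ := (e.map (fun n => n + (q + 1))).sum

@[simp] lemma w_zero : w q 0 = 0 := rfl
@[simp] lemma w_add (e e' : Multiset ℕ) : w q (e + e') = w q e + w q e' := by simp [w]
@[simp] lemma w_replicate (k n : ℕ) : w q (replicate k n) = k * (n + (q + 1)) := by
  simp [w, Multiset.map_replicate, Multiset.sum_replicate]

lemma w_map_pred : ∀ {e : Multiset ℕ}, (∀ n ∈ e, 1 ≤ n) →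
    w q (e.map (· - 1)) + Multiset.card e = w q e := by
  intro e
  induction e using Multiset.induction_on with
  | empty => simp
  | cons n e ih =>
      intro h
      have hn : 1 ≤ n := h n (mem_cons_self n e)
      have ih' := ih (fun m hm => h m (mem_cons_of_mem hm))
      simp only [Multiset.map_cons, w, Multiset.sum_cons, Multiset.card_cons] at *
      omega

end Stmt14Aux

namespace Stmt14Aux
open Multiset
variable {r : ℚ≥0} {p q : ℕ}

lemma filter_decomp (a : Multiset ℕ) :
    replicate (a.count 0) 0 + a.filter (fun n => ¬ n = 0) = a := by
  conv_rhs => rw [← Multiset.filter_add_not (fun n => n = 0) a]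
  congr 1
  simpa using (Multiset.filter_eq' a 0).symm

lemma chain_of_eval (hq2 : 2 ≤ q) (hqp : q < p) (hcop : Nat.Coprime p q)
    (hqr : (q : ℚ≥0) * r = p) (hr : 0 < r) :
    ∀ M : ℕ, ∀ e e' : Multiset ℕ, w q e + w q e' ≤ M → eval r e = eval r e' →
      Chain p q e e' := by
  intro M
  induction M using Nat.strong_induction_on with
  | _ M IH =>
    have core : ∀ a b : Multiset ℕ, w q a + w q b ≤ M → eval r a = eval r b →
        b.count 0 ≤ a.count 0 → Chain p q a b := by
      intro a b hw hev hc
      by_cases hb0 : b = 0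
      · subst hb0
        have : a = 0 := (eval_eq_zero_iff hr).mp (by simpa using hev)
        subst this; exact Relation.ReflTransGen.refl
      set A := a.count 0 with hA0
      set B := b.count 0 with hB0
      have hmod : A ≡ B [MOD p] := count_zero_modEq hcop hqr hev
      obtain ⟨k, hk⟩ : p ∣ A - B := (Nat.modEq_iff_dvd' hc).mp hmod.symm
      have hAeq : A = B + k * p := by
        have hk' : A - B = k * p := by rw [mul_comm]; exact hk
        omega
      set f0 := a.filter (fun n => ¬ n = 0) with hf0
      have ha : a = replicate A 0 + f0 := (filter_decomp a).symm
      set g0 := b.filter (fun n => ¬ n = 0) with hg0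
      have hb : b = replicate B 0 + g0 := (filter_decomp b).symm
      -- chain from a to e₁
      have hApk : A = B + k * p := hAeq
      have chain1 : Chain p q a (replicate B 0 + (replicate (k * q) 1 + f0)) := by
        rw [ha, hApk]
        exact chain_zeros k B f0
      set e₁ := replicate B 0 + (replicate (k * q) 1 + f0) with he₁
      have hev1 : eval r e₁ = eval r b := (chain1.eval_eq hqr).symm.trans hev
      set F := replicate (k * q) 1 + f0 with hF
      have hevFG : eval r F = eval r g0 := by
        have : eval r (replicate B 0) + eval r F = eval r (replicate B 0) + eval r g0 := by
          rw [← eval_add, ← eval_add, ← he₁, hev1, hb]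
        exact add_left_cancel this
      have hFpos : ∀ n ∈ F, 1 ≤ n := by
        intro n hn
        rcases mem_add.mp hn with hn | hn
        · rw [Multiset.eq_of_mem_replicate hn]
        · have := Multiset.of_mem_filter hn; omega
      have hGpos : ∀ n ∈ g0, 1 ≤ n := by
        intro n hn
        have := Multiset.of_mem_filter hn; omega
      by_cases hFz : F = 0
      · have : g0 = 0 := (eval_eq_zero_iff hr).mp (by rw [← hevFG, hFz]; rfl)
        rw [hb, this, add_zero, ← add_zero (replicate B 0), ← hFz]
        exact chain1
      -- recursive case
      set g := F.map (· - 1) with hg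
      set g' := g0.map (· - 1) with hg'
      have hmapF : g.map (· + 1) = F := by
        rw [hg, Multiset.map_map]
        exact Multiset.map_congr rfl (fun n hn => by
          have := hFpos n hn; simp; omega) |>.trans (Multiset.map_id F)
      have hmapG : g'.map (· + 1) = g0 := by
        rw [hg', Multiset.map_map]
        exact Multiset.map_congr rfl (fun n hn => by
          have := hGpos n hn; simp; omega) |>.trans (Multiset.map_id g0)
      have evmap : ∀ s : Multiset ℕ, eval r (s.map (· + 1)) = r * eval r s := by
        intro s
        rw [eval, Multiset.map_map]
        have : (fun n => r ^ n) ∘ (· + 1) = fun n => r * r ^ n := by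
          funext n; simp [pow_succ]; ring
        rw [this, Multiset.sum_map_mul_left]
        rfl
      have hevgg : eval r g = eval r g' := by
        have h1 : r * eval r g = r * eval r g' := by
          rw [← evmap, ← evmap, hmapF, hmapG, hevFG]
        exact mul_left_cancel₀ hr.ne' h1
      -- measure decrease
      have hwg : w q g + Multiset.card F = w q F := w_map_pred hFpos
      have hwg' : w q g' + Multiset.card g0 = w q g0 := w_map_pred hGpos
      have hcardF : 1 ≤ Multiset.card F := by
        rwa [Nat.one_le_iff_ne_zero, Ne, Multiset.card_eq_zero]
      have hwFa : w q F ≤ w q a := by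
        rw [hF, ha, hApk]
        simp only [w_add, w_replicate]
        have hp1 : q + 1 ≤ p := hqp
        have key : (q + 1) * (q + 1) ≤ p * (q + 1) := Nat.mul_le_mul hp1 (le_refl (q + 1))
        nlinarith [key]
      have hwGb : w q g0 ≤ w q b := by rw [hb, w_add]; omega
      have hlt : w q g + w q g' < M := by
        have h1 : w q g < w q F := by omega
        have h2 : w q g' ≤ w q g0 := by omega
        omega
      have chain2 : Chain p q g g' := IH _ hlt g g' le_rfl hevgg
      have chain3 : Chain p q F g0 := by
        have := chain2.map_succ
        rwa [hmapF, hmapG] at this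
      have chain4 : Chain p q e₁ b := by
        rw [he₁, hb]
        exact chain3.add_left (replicate B 0)
      exact chain1.trans chain4
    intro e e' hw hev
    rcases le_total (e'.count 0) (e.count 0) with hc | hc
    · exact core e e' hw hev hc
    · exact chain_symm (core e' e (by omega) hev.symm hc)

end Stmt14Aux

namespace Stmt14Aux
open Multiset
variable {r : ℚ≥0} {p q : ℕ}

lemma chain_singleton (hq2 : 2 ≤ q) (hqp : q < p) {n : ℕ} {e : Multiset ℕ}
    (h : Chain p q ({n} : Multiset ℕ) e) : e = ({n} : Multiset ℕ) := by
  rcases Relation.ReflTransGen.cases_head h with rfl | ⟨c, hstep, -⟩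
  · rfl
  · exfalso
    rcases hstep with ⟨t, m, h1, -⟩ | ⟨t, m, -, h1⟩
    · have := congrArg Multiset.card h1
      simp [Multiset.card_replicate] at this
      omega
    · have := congrArg Multiset.card h1
      simp [Multiset.card_replicate] at this
      omega

lemma walk (hqp : q < p) {e e' : Multiset ℕ} (h : Chain p q e e') :
    ∀ l : ℕ, Multiset.card e ≤ l → l < Multiset.card e' →
      ∃ u : Multiset ℕ, Chain p q e u ∧ l < Multiset.card u ∧
        Multiset.card u ≤ l + (p - q) := by
  induction h with
  | refl => intro l h1 h2; omega
  | @tail b c hab hstep ih =>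
      intro l h1 h2
      by_cases hb : Multiset.card b ≤ l
      · rcases hstep with ⟨t, m, hb1, hc1⟩ | ⟨t, m, hc1, hb1⟩
        · exfalso
          have hcb := congrArg Multiset.card hb1
          have hcc := congrArg Multiset.card hc1
          simp [Multiset.card_replicate] at hcb hcc
          omega
        · refine ⟨c, hab.tail (Or.inr ⟨t, m, hc1, hb1⟩), h2, ?_⟩
          have hcb := congrArg Multiset.card hb1
          have hcc := congrArg Multiset.card hc1
          simp [Multiset.card_replicate] at hcb hcc
          omega
      · obtain ⟨u, hu1, hu2, hu3⟩ := ih l h1 (by omega)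
        exact ⟨u, hu1, hu2, hu3⟩

section Monoid

variable (r) (S : AddSubmonoid ℚ≥0)
  (hS : S = AddSubmonoid.closure {q : ℚ≥0 | ∃ n : ℕ, q = r ^ n})

include hS in
lemma mem_S (x : ℚ≥0) : x ∈ S ↔ ∃ e : Multiset ℕ, eval r e = x := by
  subst hS
  constructor
  · intro hx
    induction hx using AddSubmonoid.closure_induction with
    | mem a ha => obtain ⟨n, rfl⟩ := ha; exact ⟨{n}, eval_singleton n⟩
    | zero => exact ⟨0, rfl⟩
    | add y z _ _ hy hz =>
        obtain ⟨ey, hey⟩ := hy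
        obtain ⟨ez, hez⟩ := hz
        exact ⟨ey + ez, by rw [eval_add, hey, hez]⟩
  · rintro ⟨e, rfl⟩
    induction e using Multiset.induction_on with
    | empty => exact AddSubmonoid.zero_mem _
    | cons n e ih =>
        rw [eval_cons]
        exact AddSubmonoid.add_mem _ (AddSubmonoid.subset_closure ⟨n, rfl⟩) ih

include hS in
lemma atoms_eq (hq2 : 2 ≤ q) (hqp : q < p) (hcop : Nat.Coprime p q)
    (hqr : (q : ℚ≥0) * r = p) (hr : 0 < r) :
    PMatoms S = {a : ℚ≥0 | ∃ n : ℕ, a = r ^ n} := by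
  ext a
  constructor
  · rintro ⟨haS, ha0, hsum⟩
    obtain ⟨e, rfl⟩ := (mem_S r S hS a).mp haS
    have he0 : e ≠ 0 := by
      rintro rfl; exact ha0 rfl
    obtain ⟨n, hn⟩ := exists_mem_of_ne_zero he0
    obtain ⟨t, rfl⟩ := exists_cons_of_mem hn
    rcases eq_or_ne t 0 with rfl | ht
    · exact ⟨n, by simp⟩
    · exfalso
      refine hsum (r ^ n) ((mem_S r S hS _).mpr ⟨{n}, eval_singleton n⟩)
        (eval r t) ((mem_S r S hS _).mpr ⟨t, rfl⟩)
        (pow_pos hr n).ne' (fun h0 => ht ((eval_eq_zero_iff hr).mp h0)) ?_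
      rw [eval_cons]
  · rintro ⟨n, rfl⟩
    refine ⟨?_, (pow_pos hr n).ne', ?_⟩
    · rw [hS]; exact AddSubmonoid.subset_closure ⟨n, rfl⟩
    · intro y hy z hz hy0 hz0 heq
      obtain ⟨ey, hey⟩ := (mem_S r S hS y).mp hy
      obtain ⟨ez, hez⟩ := (mem_S r S hS z).mp hz
      have hev : eval r (({n} : Multiset ℕ)) = eval r (ey + ez) := by
        rw [eval_singleton, eval_add, hey, hez, heq]
      have hchain : Chain p q ({n} : Multiset ℕ) (ey + ez) :=
        chain_of_eval hq2 hqp hcop hqr hr _ _ _ le_rfl hev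
      have := chain_singleton hq2 hqp hchain
      have hcard := congrArg Multiset.card this
      have hey0 : ey ≠ 0 := fun h => hy0 (by rw [← hey, h]; rfl)
      have hez0 : ez ≠ 0 := fun h => hz0 (by rw [← hez, h]; rfl)
      have h1 : 1 ≤ Multiset.card ey := by
        rwa [Nat.one_le_iff_ne_zero, Ne, Multiset.card_eq_zero]
      have h2 : 1 ≤ Multiset.card ez := by
        rwa [Nat.one_le_iff_ne_zero, Ne, Multiset.card_eq_zero]
      simp [Multiset.card_add] at hcard
      omega

lemma exists_expmultiset : ∀ s : Multiset ℚ≥0, (∀ a ∈ s, ∃ n : ℕ, a = r ^ n) →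
    ∃ e : Multiset ℕ, e.map (fun n => r ^ n) = s := by
  intro s
  induction s using Multiset.induction_on with
  | empty => exact fun _ => ⟨0, rfl⟩
  | cons a s ih =>
      intro h
      obtain ⟨n, rfl⟩ := h a (mem_cons_self a s)
      obtain ⟨e, he⟩ := ih (fun b hb => h b (mem_cons_of_mem hb))
      exact ⟨n ::ₘ e, by rw [Multiset.map_cons, he]⟩

include hS in
lemma lengths_iff (hq2 : 2 ≤ q) (hqp : q < p) (hcop : Nat.Coprime p q)
    (hqr : (q : ℚ≥0) * r = p) (hr : 0 < r) (x : ℚ≥0) (m : ℕ) :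
    m ∈ PMlengths S x ↔ ∃ e : Multiset ℕ, eval r e = x ∧ Multiset.card e = m := by
  have hat := atoms_eq r S hS hq2 hqp hcop hqr hr
  constructor
  · rintro ⟨s, ⟨hats, hsum⟩, hcard⟩
    obtain ⟨e, he⟩ := exists_expmultiset r s (fun a ha => by
      have := hats a ha; rwa [hat] at this)
    exact ⟨e, by rw [eval, he, hsum], by rw [← hcard, ← he, Multiset.card_map]⟩
  · rintro ⟨e, hev, rfl⟩
    refine ⟨e.map (fun n => r ^ n), ⟨?_, hev⟩, Multiset.card_map _ _⟩
    intro a ha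
    rw [hat]
    obtain ⟨n, _, rfl⟩ := Multiset.mem_map.mp ha
    exact ⟨n, rfl⟩

end Monoid

end Stmt14Aux

open Stmt14Aux Multiset in
theorem stmt14 (r : ℚ≥0) (h1 : 1 < r) (hn : ∀ n : ℕ, r ≠ (n : ℚ≥0))
    (S : AddSubmonoid ℚ≥0)
    (hS : S = AddSubmonoid.closure {q : ℚ≥0 | ∃ n : ℕ, q = r ^ n}) :
    PMDelta S ⊆ {r.num - r.den} := by
  intro d hd
  have hr : 0 < r := lt_trans zero_lt_one h1
  set p := r.num with hp
  set q := r.den with hq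
  have hqr : (q : ℚ≥0) * r = p := by
    exact_mod_cast NNRat.den_mul_eq_num r
  have hq1 : q ≠ 1 := by
    intro h
    apply hn p
    rw [← hqr, h, Nat.cast_one, one_mul]
  have hq2 : 2 ≤ q := by
    have := r.den_pos
    omega
  have hqp : q < p := by
    have h2 : (q : ℚ≥0) * 1 < (q : ℚ≥0) * r := by
      refine mul_lt_mul_of_pos_left h1 ?_
      exact_mod_cast Nat.pos_of_ne_zero (by omega)
    rw [mul_one, hqr] at h2
    exact_mod_cast h2
  have hcop : Nat.Coprime p q := r.coprime_num_den
  -- unpack the distance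
  rw [PMDelta, Set.mem_iUnion₂] at hd
  obtain ⟨x, hx, hd0, l, hl, hIcc⟩ := hd
  have hld : l + d ∈ PMlengths S x := by
    have : l + d ∈ PMlengths S x ∩ Set.Icc l (l + d) := by
      rw [hIcc]; simp
    exact this.1
  obtain ⟨e, he, hce⟩ := (lengths_iff r S hS hq2 hqp hcop hqr hr x l).mp hl
  obtain ⟨e', he', hce'⟩ := (lengths_iff r S hS hq2 hqp hcop hqr hr x (l + d)).mp hld
  have hchain : Chain p q e e' :=
    chain_of_eval hq2 hqp hcop hqr hr _ _ _ le_rfl (he.trans he'.symm)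
  have hmod : l ≡ l + d [MOD p - q] := by
    have := hchain.card_modEq hqp.le
    rwa [hce, hce'] at this
  have hdvd : p - q ∣ d := by
    have := (Nat.modEq_iff_dvd' (Nat.le_add_right l d)).mp hmod
    simpa using this
  have hpq0 : 0 < p - q := by omega
  have hdge : p - q ≤ d := Nat.le_of_dvd hd0 hdvd
  obtain ⟨u, hcu, hul, hule⟩ := walk hqp hchain l (by omega) (by omega)
  have hux : eval r u = x := (hcu.eval_eq hqr).symm.trans he
  have hcu_mem : Multiset.card u ∈ PMlengths S x :=
    (lengths_iff r S hS hq2 hqp hcop hqr hr x _).mpr ⟨u, hux, rfl⟩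
  have hmem2 : Multiset.card u ∈ PMlengths S x ∩ Set.Icc l (l + d) :=
    ⟨hcu_mem, by constructor <;> omega⟩
  rw [hIcc] at hmem2
  simp only [Set.mem_insert_iff, Set.mem_singleton_iff] at hmem2
  have hdeq : d = p - q := by omega
  simpa [Set.mem_singleton_iff] using hdeq
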